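/- Let k ≥ 1, M ≥ 0, C ≥ 0. Let f_m : (0,∞) → ℝ (m ∈ ℕ) and f : (0,∞) → ℝ be such that f_m(ρ₀) → f(ρ₀) as m → ∞ for every ρ₀ > 0. Let c_{j,m} : (0,∞) → ℝ (1 ≤ j ≤ k, m ∈ ℕ) satisfy |c_{j,m}(ρ₀)| ≤ M for all j, m, ρ₀, and assume that for every m, every ρ₀ > 0 and every ρ ∈ (0,1]: |f_m(ρ₀ + ρ) − f_m(ρ₀) − ∑_{j=1}^{k} c_{j,m}(ρ₀) ρ^j / j!| ≤ C ρ^{k+1}. Then for every 1 ≤ j ≤ k and every ρ₀ > 0 the limit c_j(ρ₀) := lim_{m→∞} c_{j,m}(ρ₀) exists, and the limit functions satisfy |f(ρ₀ + ρ) − f(ρ₀) − ∑_{j=1}^{k} c_j(ρ₀) ρ^j / j!| ≤ C ρ^{k+1} for all ρ₀ > 0 and ρ ∈ (0,1]. -/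

import Mathlib

open Filter Matrix


lemma keyA (k : ℕ) : ∃ K : ℝ, 0 ≤ K ∧ ∀ (a : Fin k → ℝ) (B : ℝ), 0 ≤ B →
    (∀ i : Fin k, |∑ p : Fin k, a p * ((i : ℝ) + 1) ^ ((p : ℕ) + 1)| ≤ B) →
    ∀ p, |a p| ≤ K * B := by
  classical
  set V : Matrix (Fin k) (Fin k) ℝ :=
    Matrix.of (fun i p : Fin k => ((i : ℝ) + 1) ^ ((p : ℕ) + 1)) with hV
  have hdet : IsUnit V.det := by
    have hVeq : V = Matrix.diagonal (fun i : Fin k => ((i : ℝ) + 1)) *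
        Matrix.vandermonde (fun i : Fin k => (i : ℝ) + 1) := by
      ext i p
      simp [hV, Matrix.mul_apply, Matrix.diagonal, Matrix.vandermonde, pow_succ,
        Finset.sum_ite_eq, Finset.mem_univ]
      ring
    rw [isUnit_iff_ne_zero, hVeq, Matrix.det_mul, Matrix.det_diagonal,
      Matrix.det_vandermonde]
    apply mul_ne_zero
    · exact Finset.prod_ne_zero_iff.mpr fun i _ => by positivity
    · apply Finset.prod_ne_zero_iff.mpr; intro i _
      apply Finset.prod_ne_zero_iff.mpr; intro q hq
      have h1 : i < q := Finset.mem_Ioi.mp hq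
      have h2 : ((i : ℕ) : ℝ) < ((q : ℕ) : ℝ) := by exact_mod_cast h1
      intro h; nlinarith
  refine ⟨∑ p : Fin k, ∑ q : Fin k, |V⁻¹ p q|, by positivity, ?_⟩
  intro a B hB hbound p
  have hinv : V⁻¹ * V = 1 := Matrix.nonsing_inv_mul V hdet
  have ha : a = V⁻¹.mulVec (V.mulVec a) := by
    rw [Matrix.mulVec_mulVec, hinv, Matrix.one_mulVec]
  have haj : a p = ∑ q : Fin k, V⁻¹ p q * (V.mulVec a) q := by
    conv_lhs => rw [ha]
    simp [Matrix.mulVec, dotProduct]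
  have hvq : ∀ q : Fin k, |(V.mulVec a) q| ≤ B := by
    intro q
    have : (V.mulVec a) q = ∑ j : Fin k, a j * ((q : ℝ) + 1) ^ ((j : ℕ) + 1) := by
      simp [Matrix.mulVec, dotProduct, hV]
      exact Finset.sum_congr rfl fun j _ => mul_comm _ _
    rw [this]; exact hbound q
  calc |a p| = |∑ q : Fin k, V⁻¹ p q * (V.mulVec a) q| := by rw [haj]
    _ ≤ ∑ q : Fin k, |V⁻¹ p q * (V.mulVec a) q| := Finset.abs_sum_le_sum_abs _ _
    _ ≤ ∑ q : Fin k, |V⁻¹ p q| * B := by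
        apply Finset.sum_le_sum
        intro q _
        rw [abs_mul]
        exact mul_le_mul_of_nonneg_left (hvq q) (abs_nonneg _)
    _ = (∑ q : Fin k, |V⁻¹ p q|) * B := by rw [Finset.sum_mul]
    _ ≤ (∑ p' : Fin k, ∑ q : Fin k, |V⁻¹ p' q|) * B := by
        apply mul_le_mul_of_nonneg_right _ hB
        exact Finset.single_le_sum (fun p' _ => Finset.sum_nonneg fun q _ => abs_nonneg (V⁻¹ p' q))
          (Finset.mem_univ p)

set_option maxHeartbeats 1000000

/-- if `f_m → f` pointwise on `(0,∞)` and each `f_m` admits a uniform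
one-sided `k`-th order expansion with coefficients `c_{j,m}` bounded by `M`, then the
limits `c_j(ρ₀) = lim_m c_{j,m}(ρ₀)` exist for `1 ≤ j ≤ k` and `ρ₀ > 0`, and the limit
function `f` satisfies the same expansion with coefficients `c_j`. -/
theorem limit_of_finite_volume_expansions
    (k : ℕ) (hk : 1 ≤ k) (M C : ℝ) (hM : 0 ≤ M) (hC : 0 ≤ C)
    (fm : ℕ → ℝ → ℝ) (f : ℝ → ℝ)
    (hconv : ∀ ρ₀ : ℝ, 0 < ρ₀ → Tendsto (fun m => fm m ρ₀) atTop (nhds (f ρ₀)))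
    (cm : ℕ → ℕ → ℝ → ℝ)
    (hbd : ∀ j m : ℕ, 1 ≤ j → j ≤ k → ∀ ρ₀ : ℝ, 0 < ρ₀ → |cm j m ρ₀| ≤ M)
    (hexp : ∀ m : ℕ, ∀ ρ₀ : ℝ, 0 < ρ₀ → ∀ ρ : ℝ, 0 < ρ → ρ ≤ 1 →
      |fm m (ρ₀ + ρ) - fm m ρ₀ -
          ∑ j ∈ Finset.Icc 1 k, cm j m ρ₀ * ρ ^ j / (Nat.factorial j : ℝ)| ≤
        C * ρ ^ (k + 1)) :
    ∃ c : ℕ → ℝ → ℝ,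
      (∀ j : ℕ, 1 ≤ j → j ≤ k → ∀ ρ₀ : ℝ, 0 < ρ₀ →
        Tendsto (fun m => cm j m ρ₀) atTop (nhds (c j ρ₀))) ∧
      (∀ ρ₀ : ℝ, 0 < ρ₀ → ∀ ρ : ℝ, 0 < ρ → ρ ≤ 1 →
        |f (ρ₀ + ρ) - f ρ₀ -
            ∑ j ∈ Finset.Icc 1 k, c j ρ₀ * ρ ^ j / (Nat.factorial j : ℝ)| ≤
          C * ρ ^ (k + 1)) := by
  classical
  obtain ⟨K, hK0, hKA⟩ := keyA k
  have hkpos : (0:ℝ) < k := by exact_mod_cast hk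
  set F : ℝ := (Nat.factorial k : ℝ) with hF
  have hFpos : 0 < F := by positivity
  have key : ∀ j : ℕ, 1 ≤ j → j ≤ k → ∀ ρ₀ : ℝ, 0 < ρ₀ →
      ∃ L, Tendsto (fun m => cm j m ρ₀) atTop (nhds L) := by
    intro j hj1 hjk ρ₀ hρ₀
    apply cauchySeq_tendsto_of_complete
    rw [Metric.cauchySeq_iff]
    intro ε hε
    set A1 : ℝ := 2 * C * F * K * (k : ℝ) ^ (k + 1) with hA1
    have hA1nonneg : 0 ≤ A1 := by positivity
    set t : ℝ := min ((k:ℝ)⁻¹) (ε / (2 * (A1 + 1))) with ht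
    have htpos : 0 < t := lt_min (by positivity) (by positivity)
    have htk : t * k ≤ 1 := by
      have h1 : t ≤ (k:ℝ)⁻¹ := min_le_left _ _
      calc t * k ≤ (k:ℝ)⁻¹ * k := by nlinarith
        _ = 1 := inv_mul_cancel₀ (ne_of_gt hkpos)
    have ht1 : t ≤ 1 := by
      have hk1 : (1:ℝ) ≤ k := by exact_mod_cast hk
      nlinarith
    have htε : t * (2 * (A1 + 1)) ≤ ε := by
      have h1 : t ≤ ε / (2 * (A1 + 1)) := min_le_right _ _
      rw [le_div_iff₀ (by positivity)] at h1
      exact h1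
    set δ : ℝ := ε * t ^ k / (8 * (F * K + 1)) with hδ
    have hδpos : 0 < δ := by positivity
    have hC1 : ∀ x : ℝ, 0 < x → CauchySeq (fun m => fm m x) := fun x hx =>
      (hconv x hx).cauchySeq
    have hpt : ∀ i : Fin k, ∃ N, ∀ m, N ≤ m → ∀ n, N ≤ n →
        dist (fm m (ρ₀ + t * ((i:ℝ) + 1))) (fm n (ρ₀ + t * ((i:ℝ) + 1))) < δ := by
      intro i
      exact Metric.cauchySeq_iff.mp (hC1 _ (by positivity)) δ hδpos
    choose Ni hNi using hpt
    obtain ⟨N0, hN0⟩ := Metric.cauchySeq_iff.mp (hC1 ρ₀ hρ₀) δ hδpos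
    refine ⟨max N0 (Finset.univ.sup Ni), ?_⟩
    intro m hm n hn
    set d : ℕ → ℝ := fun j' => cm j' m ρ₀ - cm j' n ρ₀ with hd
    set a : Fin k → ℝ :=
      fun p => d ((p:ℕ) + 1) * t ^ ((p:ℕ) + 1) / (Nat.factorial ((p:ℕ) + 1) : ℝ) with hadef
    set B : ℝ := 2 * C * t ^ (k + 1) * (k : ℝ) ^ (k + 1) + 2 * δ with hB
    have hBnonneg : 0 ≤ B := by positivity
    have hbound : ∀ i : Fin k, |∑ p : Fin k, a p * ((i : ℝ) + 1) ^ ((p : ℕ) + 1)| ≤ B := by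
      intro i
      set ρ : ℝ := t * ((i:ℝ) + 1) with hρdef
      have hρpos : 0 < ρ := by positivity
      have hik : ((i:ℕ):ℝ) + 1 ≤ (k:ℝ) := by exact_mod_cast i.is_lt
      have hρ1 : ρ ≤ 1 := by
        calc ρ ≤ t * k := by nlinarith
          _ ≤ 1 := htk
      have h1 := hexp m ρ₀ hρ₀ ρ hρpos hρ1
      have h2 := hexp n ρ₀ hρ₀ ρ hρpos hρ1
      have hsum : ∑ p : Fin k, a p * ((i : ℝ) + 1) ^ ((p : ℕ) + 1)
          = (∑ j' ∈ Finset.Icc 1 k, cm j' m ρ₀ * ρ ^ j' / (Nat.factorial j' : ℝ))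
            - (∑ j' ∈ Finset.Icc 1 k, cm j' n ρ₀ * ρ ^ j' / (Nat.factorial j' : ℝ)) := by
        rw [← Finset.sum_sub_distrib]
        have h3 : ∀ j' ∈ Finset.Icc 1 k,
            cm j' m ρ₀ * ρ ^ j' / (Nat.factorial j' : ℝ)
              - cm j' n ρ₀ * ρ ^ j' / (Nat.factorial j' : ℝ)
            = d j' * ρ ^ j' / (Nat.factorial j' : ℝ) := by
          intro j' _; rw [hd]; ring
        rw [Finset.sum_congr rfl h3, ← Finset.Ico_add_one_right_eq_Icc, Finset.sum_Ico_eq_sum_range]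
        rw [show k + 1 - 1 = k from rfl]
        rw [← Fin.sum_univ_eq_sum_range (fun q => d (1 + q) * ρ ^ (1 + q) / (Nat.factorial (1 + q) : ℝ)) k]
        apply Finset.sum_congr rfl
        intro p _
        have hq : 1 + (p:ℕ) = (p:ℕ) + 1 := by omega
        rw [hq, hadef, hρdef, mul_pow]
        ring
      rw [hsum]
      have hρk : ρ ^ (k + 1) ≤ t ^ (k + 1) * (k:ℝ) ^ (k + 1) := by
        rw [← mul_pow]
        apply pow_le_pow_left₀ hρpos.le
        nlinarith
      have hCρ : C * ρ ^ (k + 1) ≤ C * (t ^ (k + 1) * (k:ℝ) ^ (k + 1)) :=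
        mul_le_mul_of_nonneg_left hρk hC
      have hu : dist (fm m (ρ₀ + ρ)) (fm n (ρ₀ + ρ)) < δ :=
        hNi i m (le_trans (le_trans (Finset.le_sup (f := Ni) (Finset.mem_univ i))
            (le_max_right _ _)) hm)
          n (le_trans (le_trans (Finset.le_sup (f := Ni) (Finset.mem_univ i))
            (le_max_right _ _)) hn)
      have hv : dist (fm m ρ₀) (fm n ρ₀) < δ :=
        hN0 m (le_trans (le_max_left _ _) hm) n (le_trans (le_max_left _ _) hn)
      rw [Real.dist_eq] at hu hv
      obtain ⟨hu1, hu2⟩ := abs_lt.mp hu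
      obtain ⟨hv1, hv2⟩ := abs_lt.mp hv
      obtain ⟨h1a, h1b⟩ := abs_le.mp h1
      obtain ⟨h2a, h2b⟩ := abs_le.mp h2
      rw [abs_le]
      constructor <;> [skip; skip] <;> · rw [hB]; linarith
    have hall := hKA a B hBnonneg hbound
    set p : Fin k := ⟨j - 1, by omega⟩ with hp
    have hpj : (p : ℕ) + 1 = j := by rw [hp]; simp; omega
    have hap := hall p
    rw [hadef] at hap
    simp only [hpj] at hap
    have hfj : (0:ℝ) < (Nat.factorial j : ℝ) := by positivity
    have habs : |d j * t ^ j / (Nat.factorial j : ℝ)|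
        = |d j| * t ^ j / (Nat.factorial j : ℝ) := by
      rw [abs_div, abs_mul, abs_of_pos (pow_pos htpos j), abs_of_pos hfj]
    rw [habs] at hap
    -- so |d j| * t ^ j ≤ (j)! * K * B
    have hdj : |d j| * t ^ k ≤ F * K * B := by
      have h4 : |d j| * t ^ j ≤ (Nat.factorial j : ℝ) * (K * B) := by
        rw [div_le_iff₀ hfj] at hap; linarith
      have h5 : t ^ k ≤ t ^ j := pow_le_pow_of_le_one htpos.le ht1 hjk
      have h6 : (Nat.factorial j : ℝ) ≤ F := by
        rw [hF]; exact_mod_cast Nat.factorial_le hjk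
      have h7 : |d j| * t ^ k ≤ |d j| * t ^ j :=
        mul_le_mul_of_nonneg_left h5 (abs_nonneg _)
      have h8 : 0 ≤ K * B := mul_nonneg hK0 hBnonneg
      calc |d j| * t ^ k ≤ (Nat.factorial j : ℝ) * (K * B) := le_trans h7 h4
        _ ≤ F * (K * B) := mul_le_mul_of_nonneg_right h6 h8
        _ = F * K * B := by ring
    -- now F * K * B < ε * t ^ k
    have htk0 : (0:ℝ) < t ^ k := pow_pos htpos k
    have hmain : F * K * B < ε * t ^ k := by
      have hBe : F * K * B = A1 * t * t ^ k + 2 * (F * K) * δ := by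
        rw [hB, hA1, pow_succ]; ring
      have hδe : δ * (8 * (F * K + 1)) = ε * t ^ k := by
        rw [hδ]; field_simp
      have hδe' : 8 * ((F * K) * δ) + 8 * δ = ε * t ^ k := by linear_combination hδe
      have hA1t : A1 * t ≤ ε / 2 := by linarith
      have hterm1 : A1 * t * t ^ k ≤ (ε / 2) * t ^ k :=
        mul_le_mul_of_nonneg_right hA1t htk0.le
      have hterm2 : 2 * ((F * K) * δ) ≤ (ε / 4) * t ^ k := by linarith
      have hεtk : 0 < ε * t ^ k := mul_pos hε htk0
      linarith [hBe, hterm1, hterm2]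
    have : |d j| * t ^ k < ε * t ^ k := lt_of_le_of_lt hdj hmain
    have hfin : |d j| < ε := lt_of_mul_lt_mul_right this htk0.le
    rw [Real.dist_eq]
    exact hfin
  set c : ℕ → ℝ → ℝ := fun j ρ₀ => limUnder atTop (fun m => cm j m ρ₀) with hc
  have hct : ∀ j : ℕ, 1 ≤ j → j ≤ k → ∀ ρ₀ : ℝ, 0 < ρ₀ →
      Tendsto (fun m => cm j m ρ₀) atTop (nhds (c j ρ₀)) := fun j h1 h2 ρ₀ h3 =>
    tendsto_nhds_limUnder (key j h1 h2 ρ₀ h3)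
  refine ⟨c, hct, ?_⟩
  intro ρ₀ hρ₀ ρ hρ hρ1
  have hρ₀ρ : 0 < ρ₀ + ρ := by linarith
  have hT : Tendsto (fun m => fm m (ρ₀ + ρ) - fm m ρ₀ -
      ∑ j ∈ Finset.Icc 1 k, cm j m ρ₀ * ρ ^ j / (Nat.factorial j : ℝ)) atTop
      (nhds (f (ρ₀ + ρ) - f ρ₀ -
        ∑ j ∈ Finset.Icc 1 k, c j ρ₀ * ρ ^ j / (Nat.factorial j : ℝ))) := by
    apply Tendsto.sub
    · exact Tendsto.sub (hconv _ hρ₀ρ) (hconv _ hρ₀)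
    · apply tendsto_finset_sum
      intro j hj
      obtain ⟨hj1, hjk⟩ := Finset.mem_Icc.mp hj
      exact ((hct j hj1 hjk ρ₀ hρ₀).mul_const _).div_const _
  exact le_of_tendsto' hT.abs (fun m => hexp m ρ₀ hρ₀ ρ hρ hρ1)
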